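/- Let x_1 ∈ Ω maximize K(x,x) over Ω and, inductively, let x_{k+1} ∈ Ω maximize S_k(x) = K(x,x) − v_k(x)ᵀ G_k⁻¹ v_k(x) over x ∈ Ω, where G_k = [K(x_i,x_j)]_{i,j=1}^k and v_k(x) = (K(x_1,x),…,K(x_k,x))ᵀ; assume each G_k (k = 1,…,n) is invertible. Then det((1/n) G_n) ≥ Π_{k=1}^n (w_K(k−1)² / (e·k)); equivalently, the product of all n eigenvalues of the empirical kernel matrix (1/n)[K(x_i,x_j)]_{i,j=1}^n (i.e. of the integral operator associated with the empirical measure (1/n)Σ_{i=1}^n δ_{x_i}) is at least Π_{k=1}^n w_K(k−1)²/(e·k), where w_K(0) = sup_{x∈Ω} √(K(x,x)). -/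

import Mathlib

open MeasureTheory Filter
open scoped ENNReal

noncomputable section

/-- The Kolmogorov `n`-width of the image of `Ω` under `Φ` in the Hilbert space `H`
(so `kolmWidth Ω Φ 0 = sup_{x ∈ Ω} ‖Φ x‖`). -/
def kolmWidth {E H : Type*} [NormedAddCommGroup H] [InnerProductSpace ℝ H]
    (Ω : Set E) (Φ : E → H) (n : ℕ) : ℝ :=
  ⨅ L : {L : Submodule ℝ H // ∃ s : Finset H, s.card ≤ n ∧ L = Submodule.span ℝ (s : Set H)},
    ⨆ x : Ω, Metric.infDist (Φ (x : E)) (L.1 : Set H)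

/-- The Gram matrix `[K(x_i,x_j)]` of the points `x : Fin n → E`, where
`K(x,y) = ⟪Φ x, Φ y⟫`. -/
def gramM {E H : Type*} [NormedAddCommGroup H] [InnerProductSpace ℝ H]
    (Φ : E → H) {n : ℕ} (x : Fin n → E) : Matrix (Fin n) (Fin n) ℝ :=
  Matrix.of fun i j => (inner ℝ (Φ (x i)) (Φ (x j)) : ℝ)

/-- The vector `v(y) = (K(x_1,y), …, K(x_n,y))`. -/
def kvec {E H : Type*} [NormedAddCommGroup H] [InnerProductSpace ℝ H]
    (Φ : E → H) {n : ℕ} (x : Fin n → E) (y : E) : Fin n → ℝ :=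
  fun i => (inner ℝ (Φ (x i)) (Φ y) : ℝ)

/-- `S_k(y) = K(y,y) − v(y)ᵀ G_k⁻¹ v(y)`; for `k = 0` this is `K(y,y)`. -/
def Sfun {E H : Type*} [NormedAddCommGroup H] [InnerProductSpace ℝ H]
    (Φ : E → H) {n : ℕ} (x : Fin n → E) (y : E) : ℝ :=
  (inner ℝ (Φ y) (Φ y) : ℝ) -
    dotProduct (kvec Φ x y) (Matrix.mulVec (gramM Φ x)⁻¹ (kvec Φ x y))

/-- When the Gram matrix is invertible, `S(y)` is the squared distance from `Φ y` to the
span of the `Φ (x i)`. -/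
lemma sfun_eq_infDist_sq {E H : Type*} [NormedAddCommGroup H] [InnerProductSpace ℝ H]
    (Φ : E → H) {k : ℕ} (x : Fin k → E) (hG : IsUnit (gramM Φ x).det) (y : E) :
    Sfun Φ x y =
      (Metric.infDist (Φ y)
        (Submodule.span ℝ (Set.range fun i => Φ (x i)) : Set H)) ^ 2 := by
  set G := gramM Φ x with hGdef
  set v := kvec Φ x y with hvdef
  set c := (G⁻¹).mulVec v with hcdef
  set p := ∑ i, c i • Φ (x i) with hpdef
  set V := Submodule.span ℝ (Set.range fun i => Φ (x i)) with hVdef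
  have hGc : G.mulVec c = v := by
    rw [hcdef, Matrix.mulVec_mulVec, Matrix.mul_nonsing_inv _ hG, Matrix.one_mulVec]
  have hinner_p : ∀ j, (inner ℝ (Φ (x j)) p : ℝ) = v j := by
    intro j
    rw [hpdef, inner_sum]
    have : ∀ i, (inner ℝ (Φ (x j)) (c i • Φ (x i)) : ℝ) = G j i * c i := by
      intro i
      rw [real_inner_smul_right]
      simp [hGdef, gramM, mul_comm]
    rw [Finset.sum_congr rfl fun i _ => this i]
    have := congrFun hGc j
    simpa [Matrix.mulVec, dotProduct] using this
  have h2 : ∀ j, (inner ℝ (Φ (x j)) (Φ y - p) : ℝ) = 0 := by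
    intro j
    rw [inner_sub_right, hinner_p]
    simp [hvdef, kvec]
  have hpV : p ∈ V := by
    refine Submodule.sum_mem _ fun i _ => Submodule.smul_mem _ _ ?_
    exact Submodule.subset_span ⟨i, rfl⟩
  have h3 : ∀ w ∈ V, (inner ℝ (Φ y - p) w : ℝ) = 0 := by
    intro w hw
    induction hw using Submodule.span_induction with
    | mem w hw => obtain ⟨j, rfl⟩ := hw; rw [real_inner_comm]; exact h2 j
    | zero => simp
    | add a b _ _ ha hb => rw [inner_add_right, ha, hb, add_zero]
    | smul r a _ ha => rw [real_inner_smul_right, ha, mul_zero]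
  have hVne : (V : Set H).Nonempty := ⟨0, Submodule.zero_mem _⟩
  have hle : ‖Φ y - p‖ ≤ Metric.infDist (Φ y) (V : Set H) := by
    rw [Metric.infDist_eq_iInf]
    have : Nonempty (V : Set H) := hVne.to_subtype
    refine le_ciInf fun w => ?_
    have hww : ((w : H) : H) ∈ V := w.2
    have hpw : p - w ∈ V := Submodule.sub_mem _ hpV hww
    have key : ‖Φ y - (w : H)‖ ^ 2 = ‖Φ y - p‖ ^ 2 + ‖p - w‖ ^ 2 := by
      have hdecomp : Φ y - (w : H) = (Φ y - p) + (p - w) := by abel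
      rw [hdecomp, norm_add_sq_real, h3 _ hpw]
      ring
    rw [dist_eq_norm]
    have h1 : ‖Φ y - p‖ ^ 2 ≤ ‖Φ y - (w : H)‖ ^ 2 := by
      rw [key]; nlinarith [sq_nonneg ‖p - (w : H)‖]
    exact (pow_le_pow_iff_left₀ (norm_nonneg _) (norm_nonneg _) two_ne_zero).mp h1
  have hge : Metric.infDist (Φ y) (V : Set H) ≤ ‖Φ y - p‖ := by
    have := Metric.infDist_le_dist_of_mem (x := Φ y) hpV
    rwa [dist_eq_norm] at this
  have hinf : Metric.infDist (Φ y) (V : Set H) = ‖Φ y - p‖ := le_antisymm hge hle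
  have hnorm : ‖Φ y - p‖ ^ 2 = Sfun Φ x y := by
    have e1 : ‖Φ y - p‖ ^ 2 = (inner ℝ (Φ y - p) (Φ y - p) : ℝ) :=
      (real_inner_self_eq_norm_sq _).symm
    have e2 : (inner ℝ (Φ y - p) (Φ y - p) : ℝ) = inner ℝ (Φ y - p) (Φ y) := by
      rw [inner_sub_right, h3 p hpV, sub_zero]
    have e3 : (inner ℝ (Φ y - p) (Φ y) : ℝ) = inner ℝ (Φ y) (Φ y) - inner ℝ p (Φ y) := by
      rw [inner_sub_left]
    have e4 : (inner ℝ p (Φ y) : ℝ) = dotProduct v c := by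
      rw [hpdef, sum_inner]
      simp only [real_inner_smul_left]
      rw [dotProduct]
      refine Finset.sum_congr rfl fun i _ => ?_
      rw [hvdef]; simp [kvec, mul_comm]
    rw [e1, e2, e3, e4]
    rfl
  rw [hinf] at *
  rw [← hnorm]

/-- Schur-complement recursion for Gram determinants. -/
lemma det_gram_succ {E H : Type*} [NormedAddCommGroup H] [InnerProductSpace ℝ H]
    (Φ : E → H) (x : ℕ → E) (k : ℕ)
    (hG : IsUnit (gramM Φ (fun i : Fin k => x i)).det) :
    (gramM Φ (fun i : Fin (k+1) => x i)).det =
      (gramM Φ (fun i : Fin k => x i)).det * Sfun Φ (fun i : Fin k => x i) (x k) := by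
  set A := gramM Φ (fun i : Fin k => x i) with hA
  set v := kvec Φ (fun i : Fin k => x i) (x k) with hv
  set B : Matrix (Fin k) (Fin 1) ℝ := Matrix.of (fun i _ => v i) with hB
  set C : Matrix (Fin 1) (Fin k) ℝ := Matrix.of (fun _ j => v j) with hC
  set D : Matrix (Fin 1) (Fin 1) ℝ :=
    Matrix.of (fun _ _ => (inner ℝ (Φ (x k)) (Φ (x k)) : ℝ)) with hD
  have hre : Matrix.fromBlocks A B C D =
      (gramM Φ (fun i : Fin (k+1) => x i)).submatrix finSumFinEquiv finSumFinEquiv := by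
    ext i j
    rcases i with i | i <;> rcases j with j | j <;>
      simp [hA, hB, hC, hD, hv, gramM, kvec, Matrix.fromBlocks, Matrix.submatrix,
        finSumFinEquiv, Fin.castAdd, Fin.natAdd, Fin.val_eq_zero,
        real_inner_comm]
  haveI : Invertible A := Matrix.invertibleOfIsUnitDet A hG
  have hdet : (gramM Φ (fun i : Fin (k+1) => x i)).det = (Matrix.fromBlocks A B C D).det := by
    rw [hre, Matrix.det_submatrix_equiv_self]
  rw [hdet, Matrix.det_fromBlocks₁₁]
  congr 1
  rw [Matrix.det_fin_one]
  have hinv : (⅟A : Matrix (Fin k) (Fin k) ℝ) = A⁻¹ := Matrix.invOf_eq_nonsing_inv A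
  rw [hinv]
  show D 0 0 - (C * A⁻¹ * B) 0 0 = Sfun Φ (fun i : Fin k => x i) (x k)
  have : (C * A⁻¹ * B) 0 0 = dotProduct v (A⁻¹.mulVec v) := by
    simp only [Matrix.mul_apply, dotProduct, Matrix.mulVec, hB, hC, Matrix.of_apply,
      Finset.sum_mul, Finset.mul_sum]
    rw [Finset.sum_comm]
    exact Finset.sum_congr rfl fun j _ => Finset.sum_congr rfl fun i _ => by ring
  rw [this]
  rfl

/-- The Gram determinant equals the product of power-function values at the chosen points. -/
lemma det_gram_eq_prod {E H : Type*} [NormedAddCommGroup H] [InnerProductSpace ℝ H]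
    (Φ : E → H) (x : ℕ → E) (n : ℕ)
    (hG : ∀ k, k < n → IsUnit (gramM Φ (fun i : Fin k => x i)).det) :
    (gramM Φ (fun i : Fin n => x i)).det =
      ∏ k ∈ Finset.range n, Sfun Φ (fun i : Fin k => x i) (x k) := by
  induction n with
  | zero => simp [Matrix.det_isEmpty]
  | succ m ih =>
    rw [Finset.prod_range_succ, ← ih (fun k hk => hG k (hk.trans (Nat.lt_succ_self m))),
      det_gram_succ Φ x m (hG m (Nat.lt_succ_self m))]

theorem det_greedy_ge {d : ℕ} {H : Type*}
    [NormedAddCommGroup H] [InnerProductSpace ℝ H]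
    (Ω : Set (EuclideanSpace ℝ (Fin d))) (hΩ : IsCompact Ω) (hne : Ω.Nonempty)
    (Φ : EuclideanSpace ℝ (Fin d) → H) (hΦ : ContinuousOn Φ Ω)
    (n : ℕ) (hn : 1 ≤ n) (x : ℕ → EuclideanSpace ℝ (Fin d))
    (hx : ∀ k, k < n → x k ∈ Ω)
    (hmax : ∀ k, k < n → ∀ y ∈ Ω,
      Sfun Φ (fun i : Fin k => x i) y ≤ Sfun Φ (fun i : Fin k => x i) (x k))
    (hG : ∀ k, 1 ≤ k → k ≤ n → IsUnit (gramM Φ (fun i : Fin k => x i)).det) :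
    ∏ k ∈ Finset.range n, (kolmWidth Ω Φ k) ^ 2 / (Real.exp 1 * (k + 1)) ≤
      Matrix.det (((1 : ℝ) / n) • gramM Φ (fun i : Fin n => x i)) := by
  classical
  have hnpos : (0 : ℝ) < n := by exact_mod_cast hn
  -- Gram determinants of all orders up to n are units (k = 0 is the empty matrix).
  have hG' : ∀ k, k ≤ n → IsUnit (gramM Φ (fun i : Fin k => x i)).det := by
    intro k hk
    rcases Nat.eq_zero_or_pos k with rfl | hkpos
    · simp [Matrix.det_isEmpty]
    · exact hG k hkpos hk
  -- Power function values at the greedy points.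
  set S : ℕ → ℝ := fun k => Sfun Φ (fun i : Fin k => x i) (x k) with hSdef
  -- S k = (infDist)², in particular nonnegative.
  have hSeq : ∀ k, k < n → S k =
      (Metric.infDist (Φ (x k))
        (Submodule.span ℝ (Set.range fun i : Fin k => Φ (x i)) : Set H)) ^ 2 := by
    intro k hk
    exact sfun_eq_infDist_sq Φ _ (hG' k hk.le) (x k)
  have hSnonneg : ∀ k, k < n → 0 ≤ S k := fun k hk => (hSeq k hk) ▸ sq_nonneg _
  -- Width bound: kolmWidth Ω Φ k ≤ sqrt (S k), hence (kolmWidth)² ≤ S k.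
  have hwidth : ∀ k, k < n → (kolmWidth Ω Φ k) ^ 2 ≤ S k := by
    intro k hk
    set V := Submodule.span ℝ (Set.range fun i : Fin k => Φ (x i)) with hV
    -- V is spanned by a finset of cardinality ≤ k
    have hmemV : ∃ s : Finset H, s.card ≤ k ∧ V = Submodule.span ℝ (s : Set H) := by
      refine ⟨Finset.image (fun i : Fin k => Φ (x i)) Finset.univ,
        (Finset.card_image_le).trans (by simp), ?_⟩
      rw [hV]
      congr 1
      simp [Finset.coe_image, Set.image_univ]
    -- each distance from Ω to V is ≤ sqrt (S k)
    have hptle : ∀ y : Ω, Metric.infDist (Φ (y : EuclideanSpace ℝ (Fin d))) (V : Set H)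
        ≤ Real.sqrt (S k) := by
      intro y
      have h1 : Sfun Φ (fun i : Fin k => x i) (y : EuclideanSpace ℝ (Fin d)) =
          (Metric.infDist (Φ (y : EuclideanSpace ℝ (Fin d))) (V : Set H)) ^ 2 :=
        sfun_eq_infDist_sq Φ _ (hG' k hk.le) _
      have h2 : Sfun Φ (fun i : Fin k => x i) (y : EuclideanSpace ℝ (Fin d)) ≤ S k :=
        hmax k hk _ y.2
      have h3 : (Metric.infDist (Φ (y : EuclideanSpace ℝ (Fin d))) (V : Set H)) ^ 2 ≤ S k := by
        rw [← h1]; exact h2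
      calc Metric.infDist (Φ (y : EuclideanSpace ℝ (Fin d))) (V : Set H)
          = Real.sqrt ((Metric.infDist (Φ (y : EuclideanSpace ℝ (Fin d))) (V : Set H)) ^ 2) :=
            (Real.sqrt_sq Metric.infDist_nonneg).symm
        _ ≤ Real.sqrt (S k) := Real.sqrt_le_sqrt h3
    have hΩne : Nonempty Ω := hne.to_subtype
    have hsup : (⨆ y : Ω, Metric.infDist (Φ (y : EuclideanSpace ℝ (Fin d))) (V : Set H))
        ≤ Real.sqrt (S k) := ciSup_le hptle
    have hwle : kolmWidth Ω Φ k ≤ Real.sqrt (S k) := by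
      have hbdd : BddBelow (Set.range fun L :
          {L : Submodule ℝ H // ∃ s : Finset H, s.card ≤ k ∧ L = Submodule.span ℝ (s : Set H)} =>
          ⨆ y : Ω, Metric.infDist (Φ (y : EuclideanSpace ℝ (Fin d))) (L.1 : Set H)) := by
        refine ⟨0, fun r hr => ?_⟩
        obtain ⟨L, rfl⟩ := hr
        exact Real.iSup_nonneg fun y => Metric.infDist_nonneg
      exact (ciInf_le hbdd (⟨V, hmemV⟩ :
        {L : Submodule ℝ H // ∃ s : Finset H, s.card ≤ k ∧ L = Submodule.span ℝ (s : Set H)})).trans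
        hsup
    have hwnonneg : 0 ≤ kolmWidth Ω Φ k :=
      Real.iInf_nonneg fun L => Real.iSup_nonneg fun y => Metric.infDist_nonneg
    calc (kolmWidth Ω Φ k) ^ 2 ≤ (Real.sqrt (S k)) ^ 2 :=
          pow_le_pow_left₀ hwnonneg hwle 2
      _ = S k := Real.sq_sqrt (hSnonneg k hk)
  -- determinant formula
  have hdet : (((1 : ℝ) / n) • gramM Φ (fun i : Fin n => x i)).det =
      ((1 : ℝ) / n) ^ n * ∏ k ∈ Finset.range n, S k := by
    rw [Matrix.det_smul, det_gram_eq_prod Φ x n (fun k hk => hG' k hk.le)]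
    simp
    rfl
  rw [hdet]
  -- split the left product
  have hsplit : ∏ k ∈ Finset.range n, (kolmWidth Ω Φ k) ^ 2 / (Real.exp 1 * ((k : ℝ) + 1)) =
      (∏ k ∈ Finset.range n, (kolmWidth Ω Φ k) ^ 2) /
        (Real.exp 1 ^ n * (Nat.factorial n : ℝ)) := by
    rw [Finset.prod_div_distrib, Finset.prod_mul_distrib, Finset.prod_const,
      Finset.card_range]
    congr 1
    rw [← Finset.prod_range_add_one_eq_factorial n, Nat.cast_prod]
    push_cast
    ring
  rw [hsplit]
  -- compare the two products
  have hprodle : ∏ k ∈ Finset.range n, (kolmWidth Ω Φ k) ^ 2 ≤ ∏ k ∈ Finset.range n, S k :=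
    Finset.prod_le_prod (fun k _ => sq_nonneg _)
      (fun k hk => hwidth k (Finset.mem_range.mp hk))
  have hprodnonneg : 0 ≤ ∏ k ∈ Finset.range n, (kolmWidth Ω Φ k) ^ 2 :=
    Finset.prod_nonneg fun k _ => sq_nonneg _
  -- n^n ≤ e^n · n!
  have hfact : (n : ℝ) ^ n ≤ Real.exp 1 ^ n * (Nat.factorial n : ℝ) := by
    have h1 : (n : ℝ) ^ n / (Nat.factorial n : ℝ) ≤ Real.exp n := by
      have := Real.sum_le_exp_of_nonneg (x := (n : ℝ)) (by positivity) (n + 1)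
      refine le_trans ?_ this
      exact Finset.single_le_sum (f := fun i => (n : ℝ) ^ i / (Nat.factorial i : ℝ))
        (fun i _ => by positivity) (Finset.self_mem_range_succ n)
    have h2 : Real.exp (n : ℝ) = Real.exp 1 ^ n := by
      rw [← Real.exp_nat_mul, mul_one]
    have hfpos : (0 : ℝ) < (Nat.factorial n : ℝ) := by positivity
    rw [div_le_iff₀ hfpos] at h1
    rw [← h2]
    exact h1.trans (le_of_eq rfl)
  have hepos : (0 : ℝ) < Real.exp 1 ^ n * (Nat.factorial n : ℝ) := by positivity
  have hinvle : (1 : ℝ) / (Real.exp 1 ^ n * (Nat.factorial n : ℝ)) ≤ ((1 : ℝ) / n) ^ n := by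
    rw [div_pow, one_pow]
    exact one_div_le_one_div_of_le (by positivity) hfact
  calc (∏ k ∈ Finset.range n, (kolmWidth Ω Φ k) ^ 2) /
        (Real.exp 1 ^ n * (Nat.factorial n : ℝ))
      = (∏ k ∈ Finset.range n, (kolmWidth Ω Φ k) ^ 2) *
        ((1 : ℝ) / (Real.exp 1 ^ n * (Nat.factorial n : ℝ))) := by ring
    _ ≤ (∏ k ∈ Finset.range n, S k) * ((1 : ℝ) / n) ^ n := by
        apply mul_le_mul hprodle hinvle (by positivity)
        exact Finset.prod_nonneg fun k hk => hSnonneg k (Finset.mem_range.mp hk)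
    _ = ((1 : ℝ) / n) ^ n * ∏ k ∈ Finset.range n, S k := by ring

end
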